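/- For fixed λ < 0 and fixed dt_old > 0 with 1 + 4λ·dt_old ≥ 0, the roots ρ±(dt_now) of the VSSBDF2 characteristic polynomial converge, as dt_now → ∞, to -(1/(2λ·dt_old))(1 ± √(1 + 4λ·dt_old)). -/

import Mathlib

open Filter Real


lemma aux_lim (lam d : ℝ) (hlam : lam < 0) (hd : 0 < d)
    (hdisc : 0 ≤ 1 + 4 * lam * d) (ε : ℝ) :
    Tendsto (fun t : ℝ =>
        (1 + t/d + ε * Real.sqrt ((1 + t/d)^2
            - (4*(t/d)^2/(1 + t/d)) * ((1 + 2*(t/d))/(1 + t/d) - lam * t)))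
        / (2 * ((1 + 2*(t/d))/(1 + t/d) - lam * t)))
      atTop (nhds (-(1/(2*lam*d)) * (1 + ε * Real.sqrt (1 + 4*lam*d)))) := by
  have hd0 : d ≠ 0 := hd.ne'
  have hlam0 : lam ≠ 0 := hlam.ne
  -- d/(d+t) → 0
  have h0 : Tendsto (fun t : ℝ => d / (d + t)) atTop (nhds 0) := by
    have h1 : Tendsto (fun t : ℝ => d + t) atTop atTop :=
      tendsto_atTop_add_const_left _ _ tendsto_id
    simpa [div_eq_mul_inv] using (tendsto_inv_atTop_zero.comp h1).const_mul d
  have hinv : Tendsto (fun t : ℝ => t⁻¹) atTop (nhds 0) := tendsto_inv_atTop_zero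
  -- P t * t⁻¹ → -lam
  have hP : Tendsto (fun t : ℝ => ((1 + 2*(t/d))/(1 + t/d) - lam * t) * t⁻¹)
      atTop (nhds (-lam)) := by
    have hg : Tendsto (fun t : ℝ => (2 - d/(d+t)) * t⁻¹ - lam) atTop (nhds (-lam)) := by
      have h2 : Tendsto (fun t : ℝ => ((2:ℝ) - d/(d+t)) * t⁻¹) atTop (nhds (((2:ℝ)-0)*0)) :=
        (tendsto_const_nhds.sub h0).mul hinv
      have := h2.sub_const lam
      simpa using this
    refine hg.congr' ?_
    filter_upwards [eventually_gt_atTop (0:ℝ)] with t ht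
    have ht0 : t ≠ 0 := ht.ne'
    have hdt : d + t ≠ 0 := by positivity
    have h1t : 1 + t/d ≠ 0 := by
      have : (1 : ℝ) + t/d = (d+t)/d := by field_simp
      rw [this]; positivity
    field_simp
    ring
  -- t/(1+t/d) → d ; we use the form d - d*(d/(d+t))
  have hT : Tendsto (fun t : ℝ => d - d * (d/(d+t))) atTop (nhds d) := by
    have h2 : Tendsto (fun t : ℝ => d - d * (d/(d+t))) atTop (nhds (d - d * 0)) :=
      tendsto_const_nhds.sub (h0.const_mul d)
    simpa using h2
  -- Q t * (t⁻¹)^2 → 1/d^2 + 4*lam/d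
  have hQ : Tendsto (fun t : ℝ =>
      ((1 + t/d)^2 - (4*(t/d)^2/(1 + t/d)) * ((1 + 2*(t/d))/(1 + t/d) - lam * t))
        * (t⁻¹)^2) atTop (nhds (1/d^2 + 4*lam/d)) := by
    have hg : Tendsto (fun t : ℝ =>
        (t⁻¹ + 1/d)^2 - 4/d^2 * ((d - d*(d/(d+t))) * (((1 + 2*(t/d))/(1 + t/d) - lam * t) * t⁻¹)))
        atTop (nhds (1/d^2 + 4*lam/d)) := by
      have h1 : Tendsto (fun t : ℝ => (t⁻¹ + 1/d)^2) atTop (nhds ((0 + 1/d)^2)) :=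
        (hinv.add_const _).pow 2
      have h2 := h1.sub ((hT.mul hP).const_mul (4/d^2))
      have : ((0:ℝ) + 1/d)^2 - 4/d^2 * (d * (-lam)) = 1/d^2 + 4*lam/d := by
        field_simp; ring
      rwa [this] at h2
    refine hg.congr' ?_
    filter_upwards [eventually_gt_atTop (0:ℝ)] with t ht
    have ht0 : t ≠ 0 := ht.ne'
    have hdt : d + t ≠ 0 := by positivity
    have h1t : 1 + t/d ≠ 0 := by
      have : (1 : ℝ) + t/d = (d+t)/d := by field_simp
      rw [this]; positivity
    field_simp
    ring
  -- numerator/t limit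
  have hsqrt : Tendsto (fun t : ℝ =>
      Real.sqrt (((1 + t/d)^2 - (4*(t/d)^2/(1 + t/d)) * ((1 + 2*(t/d))/(1 + t/d) - lam * t))
        * (t⁻¹)^2)) atTop (nhds (Real.sqrt (1/d^2 + 4*lam/d))) :=
    (Real.continuous_sqrt.tendsto _).comp hQ
  have hnum : Tendsto (fun t : ℝ =>
      (t⁻¹ + 1/d) + ε * Real.sqrt (((1 + t/d)^2
        - (4*(t/d)^2/(1 + t/d)) * ((1 + 2*(t/d))/(1 + t/d) - lam * t)) * (t⁻¹)^2))
      atTop (nhds ((0 + 1/d) + ε * Real.sqrt (1/d^2 + 4*lam/d))) :=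
    (hinv.add_const _).add (hsqrt.const_mul ε)
  have hden : Tendsto (fun t : ℝ =>
      2 * (((1 + 2*(t/d))/(1 + t/d) - lam * t) * t⁻¹)) atTop (nhds (2 * (-lam))) :=
    hP.const_mul 2
  have hne : (2 : ℝ) * (-lam) ≠ 0 := by
    have : (0:ℝ) < -lam := by linarith
    positivity
  have hmain := hnum.div hden hne
  -- identify the limit value
  have hval : ((0:ℝ) + 1/d + ε * Real.sqrt (1/d^2 + 4*lam/d)) / (2 * (-lam))
      = -(1/(2*lam*d)) * (1 + ε * Real.sqrt (1 + 4*lam*d)) := by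
    have h1 : 1/d^2 + 4*lam/d = (1 + 4*lam*d) * (1/d)^2 := by field_simp
    rw [h1, Real.sqrt_mul hdisc, Real.sqrt_sq (by positivity : (0:ℝ) ≤ 1/d)]
    field_simp
    ring
  rw [hval] at hmain
  refine hmain.congr' ?_
  filter_upwards [eventually_gt_atTop (0:ℝ)] with t ht
  simp only [Pi.div_apply]
  have ht0 : t ≠ 0 := ht.ne'
  have hti : (0:ℝ) ≤ t⁻¹ := by positivity
  have hsq : Real.sqrt (((1 + t/d)^2
      - (4*(t/d)^2/(1 + t/d)) * ((1 + 2*(t/d))/(1 + t/d) - lam * t)) * (t⁻¹)^2)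
      = Real.sqrt ((1 + t/d)^2
      - (4*(t/d)^2/(1 + t/d)) * ((1 + 2*(t/d))/(1 + t/d) - lam * t)) * t⁻¹ := by
    rw [Real.sqrt_mul' _ (sq_nonneg t⁻¹), Real.sqrt_sq hti]
  rw [hsq]
  have hn : (t⁻¹ + 1/d) + ε * (Real.sqrt ((1 + t/d)^2
      - (4*(t/d)^2/(1 + t/d)) * ((1 + 2*(t/d))/(1 + t/d) - lam * t)) * t⁻¹)
      = (1 + t/d + ε * Real.sqrt ((1 + t/d)^2
      - (4*(t/d)^2/(1 + t/d)) * ((1 + 2*(t/d))/(1 + t/d) - lam * t))) * t⁻¹ := by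
    field_simp
  have hdn : 2 * (((1 + 2*(t/d))/(1 + t/d) - lam * t) * t⁻¹)
      = (2 * ((1 + 2*(t/d))/(1 + t/d) - lam * t)) * t⁻¹ := by ring
  rw [hn, hdn, mul_div_mul_right _ _ (inv_ne_zero ht0)]

/-- As dt_now → ∞ (with λ < 0, dt_old > 0 and 1 + 4λ·dt_old ≥ 0 fixed), the VSSBDF2
characteristic roots ρ±(dt_now) converge to -(1/(2λ·dt_old))(1 ± √(1 + 4λ·dt_old)). -/
theorem vssbdf2_roots_large_dtnow_limit
    (lam dtold : ℝ) (hlam : lam < 0) (hdtold : 0 < dtold)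
    (hdisc : 0 ≤ 1 + 4 * lam * dtold) :
    Tendsto (fun dtnow : ℝ =>
        (1 + dtnow/dtold
          + Real.sqrt ((1 + dtnow/dtold)^2
              - (4*(dtnow/dtold)^2/(1 + dtnow/dtold))
                * ((1 + 2*(dtnow/dtold))/(1 + dtnow/dtold) - lam * dtnow)))
        / (2 * ((1 + 2*(dtnow/dtold))/(1 + dtnow/dtold) - lam * dtnow)))
      atTop (nhds (-(1/(2*lam*dtold)) * (1 + Real.sqrt (1 + 4*lam*dtold)))) ∧
    Tendsto (fun dtnow : ℝ =>
        (1 + dtnow/dtold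
          - Real.sqrt ((1 + dtnow/dtold)^2
              - (4*(dtnow/dtold)^2/(1 + dtnow/dtold))
                * ((1 + 2*(dtnow/dtold))/(1 + dtnow/dtold) - lam * dtnow)))
        / (2 * ((1 + 2*(dtnow/dtold))/(1 + dtnow/dtold) - lam * dtnow)))
      atTop (nhds (-(1/(2*lam*dtold)) * (1 - Real.sqrt (1 + 4*lam*dtold)))) := by
  constructor
  · have h := aux_lim lam dtold hlam hdtold hdisc 1
    have h2 : (-(1/(2*lam*dtold)) * (1 + (1:ℝ) * Real.sqrt (1+4*lam*dtold)))
        = -(1/(2*lam*dtold)) * (1 + Real.sqrt (1+4*lam*dtold)) := by ring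
    rw [h2] at h
    exact h.congr (fun t => by ring_nf)
  · have h := aux_lim lam dtold hlam hdtold hdisc (-1)
    have h2 : (-(1/(2*lam*dtold)) * (1 + (-1:ℝ) * Real.sqrt (1+4*lam*dtold)))
        = -(1/(2*lam*dtold)) * (1 - Real.sqrt (1+4*lam*dtold)) := by ring
    rw [h2] at h
    exact h.congr (fun t => by ring_nf)
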